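/- arXiv:2003.03331 — 2 statements merged into one kernel-verified Lean document; each statement's English description precedes it below -/
import Mathlib

section
/- For every Young diagram λ there exist integers (ω_{i,j})_{(i,j)∈λ}, depending only on λ, with the following property: for every tableau x of shape λ with entries in ℝ≥0, every tableau r satisfying the RSK relations with respect to x and every tableau b satisfying the Burge relations with respect to x satisfy Σ_{(i,j)∈λ} ω_{i,j} r_{i,j} = Σ_{(i,j)∈λ} x_{i,j} = Σ_{(i,j)∈λ} ω_{i,j} b_{i,j}. -/
/-- Two lattice points are adjacent (ℓ¹-distance 1). -/
def AdjStep (p q : ℕ × ℕ) : Prop :=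
  ((p.1 : ℤ) - q.1).natAbs + ((p.2 : ℤ) - q.2).natAbs = 1

/-- `π` is a directed lattice path from `(a,b)` to `(c,d)`:
a sequence of minimal length `|c-a|+|d-b|` of adjacent lattice points. -/
def IsDirPath (a b c d : ℕ) (π : List (ℕ × ℕ)) : Prop :=
  π.length = ((c : ℤ) - a).natAbs + ((d : ℤ) - b).natAbs + 1 ∧
  π.head? = some (a, b) ∧ π.getLast? = some (c, d) ∧
  π.Chain' AdjStep

/-- A family in `Π^{(k)}_{m,n}`: `k` pairwise disjoint directed lattice paths,
the `i`-th from `(1,i)` to `(m, n-k+i)` (`1 ≤ i ≤ k`). -/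
def NIPathFamily (m n k : ℕ) (π : Fin k → List (ℕ × ℕ)) : Prop :=
  (∀ i : Fin k, IsDirPath 1 (i.1 + 1) m (n - k + (i.1 + 1)) (π i)) ∧
  ∀ i j : Fin k, i ≠ j → ∀ p ∈ π i, p ∉ π j

/-- A family in `Π*^{(k)}_{m,n}`: `k` pairwise disjoint directed lattice paths,
the `i`-th from `(m,i)` to `(1, n-k+i)` (`1 ≤ i ≤ k`). -/
def NIPathFamilyDual (m n k : ℕ) (π : Fin k → List (ℕ × ℕ)) : Prop :=
  (∀ i : Fin k, IsDirPath m (i.1 + 1) 1 (n - k + (i.1 + 1)) (π i)) ∧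
  ∀ i j : Fin k, i ≠ j → ∀ p ∈ π i, p ∉ π j

/-- `max_{π ∈ Π^{(k)}_{m,n}} Σ_{(i,j)∈π} x_{i,j}`. -/
noncomputable def maxFlow {α : Type*} [AddCommMonoid α] [SupSet α]
    (x : ℕ × ℕ → α) (m n k : ℕ) : α :=
  sSup {v | ∃ π : Fin k → List (ℕ × ℕ), NIPathFamily m n k π ∧
    v = ∑ i : Fin k, ((π i).map x).sum}

/-- `max_{π ∈ Π*^{(k)}_{m,n}} Σ_{(i,j)∈π} x_{i,j}`. -/
noncomputable def maxFlowDual {α : Type*} [AddCommMonoid α] [SupSet α]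
    (x : ℕ × ℕ → α) (m n k : ℕ) : α :=
  sSup {v | ∃ π : Fin k → List (ℕ × ℕ), NIPathFamilyDual m n k π ∧
    v = ∑ i : Fin k, ((π i).map x).sum}

/-- A (finite) Young diagram: boxes have coordinates ≥ 1 and the set is
downward closed: with each box it contains the whole rectangle `[1,i]×[1,j]`. -/
def IsYoungDiagram (lam : Finset (ℕ × ℕ)) : Prop :=
  ∀ p ∈ lam, 1 ≤ p.1 ∧ 1 ≤ p.2 ∧ ∀ q ∈ Finset.Icc (1, 1) p, q ∈ lam

/-- `r` satisfies the RSK relations with respect to `x` on the Young diagram `λ`: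
for every border box `(m,n)` and `1 ≤ k ≤ min m n`,
`Σ_{i=1}^k r_{m-i+1,n-i+1} = max_{π ∈ Π^{(k)}_{m,n}} Σ_{(i,j)∈π} x_{i,j}`. -/
def SatisfiesRSKRel {α : Type*} [AddCommMonoid α] [SupSet α]
    (lam : Finset (ℕ × ℕ)) (x r : ℕ × ℕ → α) : Prop :=
  ∀ m n : ℕ, (m, n) ∈ lam → (m + 1, n + 1) ∉ lam →
    ∀ k : ℕ, 1 ≤ k → k ≤ min m n →
      ∑ i ∈ Finset.range k, r (m - i, n - i) = maxFlow x m n k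

/-- `b` satisfies the Burge relations with respect to `x` on the Young diagram `λ`. -/
def SatisfiesBurgeRel {α : Type*} [AddCommMonoid α] [SupSet α]
    (lam : Finset (ℕ × ℕ)) (x b : ℕ × ℕ → α) : Prop :=
  ∀ m n : ℕ, (m, n) ∈ lam → (m + 1, n + 1) ∉ lam →
    ∀ k : ℕ, 1 ≤ k → k ≤ min m n →
      ∑ i ∈ Finset.range k, b (m - i, n - i) = maxFlowDual x m n k

/-- A tableau (encoded as a function on `ℕ×ℕ` vanishing off `λ`) is interlacing if its
entries weakly increase along rows and columns of `λ`. -/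
def IsInterlacing {α : Type*} [Preorder α] (lam : Finset (ℕ × ℕ)) (f : ℕ × ℕ → α) : Prop :=
  ∀ p ∈ lam, (1 < p.1 → f (p.1 - 1, p.2) ≤ f p) ∧ (1 < p.2 → f (p.1, p.2 - 1) ≤ f p)

lemma chain'_dist : ∀ (l : List (ℕ × ℕ)) (u v : ℕ × ℕ), l.Chain' AdjStep →
    l.head? = some u → l.getLast? = some v →
    ((v.1 : ℤ) - u.1).natAbs + ((v.2 : ℤ) - u.2).natAbs + 1 ≤ l.length := by
  intro l
  induction l with
  | nil => intro u v _ h; simp at h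
  | cons a t ih =>
    intro u v hch hh hl
    have hau : a = u := by simpa using hh
    subst hau
    cases t with
    | nil =>
      have hv : a = v := by simpa using hl
      subst hv
      simp
    | cons b t' =>
      have hch' := List.isChain_cons_cons.mp hch
      have hl' : (b :: t').getLast? = some v := by
        rwa [List.getLast?_cons_cons] at hl
      have hrec := ih b v hch'.2 rfl hl'
      have hadj := hch'.1
      unfold AdjStep at hadj
      simp only [List.length_cons] at hrec ⊢
      omega

lemma dirPath_props : ∀ (l : List (ℕ × ℕ)) (a b c d : ℕ), IsDirPath a b c d l →
    l.Nodup ∧ ∀ p ∈ l, min a c ≤ p.1 ∧ p.1 ≤ max a c ∧ min b d ≤ p.2 ∧ p.2 ≤ max b d := by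
  intro l
  induction l with
  | nil => intro a b c d h; exact absurd h.2.1 (by simp)
  | cons q t ih =>
    intro a b c d h
    obtain ⟨hlen, hh, hl, hch⟩ := h
    have hq : q = (a, b) := by simpa using hh
    subst hq
    cases t with
    | nil =>
      have hcd : ((a : ℕ), (b : ℕ)) = (c, d) := by simpa using hl
      have hc : a = c := congrArg Prod.fst hcd
      have hd : b = d := congrArg Prod.snd hcd
      subst hc; subst hd
      refine ⟨by simp, ?_⟩
      intro p hp
      have : p = (a, b) := by simpa using hp
      subst this
      simp
    | cons q' t' =>
      have hch' := List.isChain_cons_cons.mp hch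
      have hlast : (q' :: t').getLast? = some (c, d) := by
        rwa [List.getLast?_cons_cons] at hl
      have hlb := chain'_dist (q' :: t') q' (c, d) hch'.2 rfl hlast
      have hadj := hch'.1
      obtain ⟨q1, q2⟩ := q'
      unfold AdjStep at hadj
      simp only [List.length_cons] at hlen hlb
      have htail : IsDirPath q1 q2 c d ((q1, q2) :: t') := by
        refine ⟨?_, rfl, hlast, hch'.2⟩
        simp only [List.length_cons]
        omega
      obtain ⟨hnd, hbd⟩ := ih q1 q2 c d htail
      constructor
      · refine List.nodup_cons.mpr ⟨?_, hnd⟩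
        intro hmem
        have hb := hbd _ hmem
        simp only at hb
        omega
      · intro p hp
        rcases List.mem_cons.mp hp with hp | hp
        · subst hp; simp only
          omega
        · have hb := hbd p hp
          omega

def vseg (col r1 r2 : ℕ) : List (ℕ × ℕ) := (List.range (r2 + 1 - r1)).map fun t => (r1 + t, col)
def hseg (row c1 c2 : ℕ) : List (ℕ × ℕ) := (List.range (c2 + 1 - c1)).map fun t => (row, c1 + t)
def Lpath (a b c d h : ℕ) : List (ℕ × ℕ) := vseg b a h ++ (hseg h (b + 1) d ++ vseg d (h + 1) c)

lemma head?_map_range {α : Type*} (f : ℕ → α) (L : ℕ) (hL : 0 < L) :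
    ((List.range L).map f).head? = some (f 0) := by
  obtain ⟨L', rfl⟩ : ∃ L', L = L' + 1 := ⟨L - 1, by omega⟩
  rw [List.range_succ_eq_map]
  simp

lemma getLast?_map_range {α : Type*} (f : ℕ → α) (L : ℕ) (hL : 0 < L) :
    ((List.range L).map f).getLast? = some (f (L - 1)) := by
  obtain ⟨L', rfl⟩ : ∃ L', L = L' + 1 := ⟨L - 1, by omega⟩
  rw [List.range_succ, List.map_append]
  simp

lemma chain'_map_range (f : ℕ → ℕ × ℕ) (L : ℕ) (h : ∀ t, t + 1 < L → AdjStep (f t) (f (t + 1))) :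
    ((List.range L).map f).Chain' AdjStep := by
  show List.IsChain _ _
  rw [List.isChain_map]
  cases L with
  | zero => simp
  | succ L' =>
    refine (List.isChain_range_succ _ _).mpr ?_
    intro m hm
    exact h m (by omega)

lemma mem_vseg {p : ℕ × ℕ} {col r1 r2 : ℕ} :
    p ∈ vseg col r1 r2 ↔ r1 ≤ p.1 ∧ p.1 ≤ r2 ∧ p.2 = col := by
  obtain ⟨p1, p2⟩ := p
  simp only [vseg, List.mem_map, List.mem_range, Prod.mk.injEq]
  constructor
  · rintro ⟨t, ht, h1, h2⟩; omega
  · rintro ⟨h1, h2, h3⟩; exact ⟨p1 - r1, by omega, by omega, by omega⟩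

lemma mem_hseg {p : ℕ × ℕ} {row c1 c2 : ℕ} :
    p ∈ hseg row c1 c2 ↔ c1 ≤ p.2 ∧ p.2 ≤ c2 ∧ p.1 = row := by
  obtain ⟨p1, p2⟩ := p
  simp only [hseg, List.mem_map, List.mem_range, Prod.mk.injEq]
  constructor
  · rintro ⟨t, ht, h1, h2⟩; omega
  · rintro ⟨h1, h2, h3⟩; exact ⟨p2 - c1, by omega, by omega, by omega⟩

lemma mem_Lpath {p : ℕ × ℕ} {a b c d h : ℕ} :
    p ∈ Lpath a b c d h ↔ (a ≤ p.1 ∧ p.1 ≤ h ∧ p.2 = b) ∨ (b + 1 ≤ p.2 ∧ p.2 ≤ d ∧ p.1 = h) ∨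
      (h + 1 ≤ p.1 ∧ p.1 ≤ c ∧ p.2 = d) := by
  simp [Lpath, List.mem_append, mem_vseg, mem_hseg]

lemma head?_vseg {col r1 r2 : ℕ} (h : r1 ≤ r2) : (vseg col r1 r2).head? = some (r1, col) := by
  rw [vseg, head?_map_range _ _ (by omega)]
  simp

lemma getLast?_vseg {col r1 r2 : ℕ} (h : r1 ≤ r2) : (vseg col r1 r2).getLast? = some (r2, col) := by
  rw [vseg, getLast?_map_range _ _ (by omega),
    show r1 + (r2 + 1 - r1 - 1) = r2 from by omega]

lemma head?_hseg {row c1 c2 : ℕ} (h : c1 ≤ c2) : (hseg row c1 c2).head? = some (row, c1) := by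
  rw [hseg, head?_map_range _ _ (by omega)]
  simp

lemma getLast?_hseg {row c1 c2 : ℕ} (h : c1 ≤ c2) : (hseg row c1 c2).getLast? = some (row, c2) := by
  rw [hseg, getLast?_map_range _ _ (by omega),
    show c1 + (c2 + 1 - c1 - 1) = c2 from by omega]

lemma vseg_nil {col r1 r2 : ℕ} (h : r2 < r1) : vseg col r1 r2 = [] := by
  rw [vseg, show r2 + 1 - r1 = 0 by omega]; simp

lemma hseg_nil {row c1 c2 : ℕ} (h : c2 < c1) : hseg row c1 c2 = [] := by
  rw [hseg, show c2 + 1 - c1 = 0 by omega]; simp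

lemma chain'_vseg {col r1 r2 : ℕ} : (vseg col r1 r2).Chain' AdjStep := by
  apply chain'_map_range
  intro t _
  unfold AdjStep
  simp only
  omega

lemma chain'_hseg {row c1 c2 : ℕ} : (hseg row c1 c2).Chain' AdjStep := by
  apply chain'_map_range
  intro t _
  unfold AdjStep
  simp only
  omega

lemma isDirPath_Lpath {a b c d h : ℕ} (h1 : a ≤ h) (h2 : h ≤ c) (h3 : b ≤ d) :
    IsDirPath a b c d (Lpath a b c d h) := by
  refine ⟨?_, ?_, ?_, ?_⟩
  · simp only [Lpath, vseg, hseg, List.length_append, List.length_map, List.length_range]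
    omega
  · rw [Lpath, List.head?_append, head?_vseg h1]
    rfl
  · rcases Nat.lt_or_ge h c with hc | hc
    · rw [Lpath, List.getLast?_append_of_ne_nil, List.getLast?_append_of_ne_nil,
        getLast?_vseg (by omega)]
      · intro hnil; rw [vseg, List.map_eq_nil_iff, List.range_eq_nil] at hnil; omega
      · intro hnil
        rcases List.append_eq_nil_iff.mp hnil with ⟨_, hnil2⟩
        rw [vseg, List.map_eq_nil_iff, List.range_eq_nil] at hnil2; omega
    · have hc' : h = c := le_antisymm h2 hc
      rw [Lpath, vseg_nil (col := d) (r1 := h + 1) (r2 := c) (by omega), List.append_nil]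
      rcases Nat.lt_or_ge b d with hd | hd
      · rw [List.getLast?_append_of_ne_nil, getLast?_hseg (by omega), hc']
        intro hnil; rw [hseg, List.map_eq_nil_iff, List.range_eq_nil] at hnil; omega
      · have hd' : b = d := le_antisymm h3 hd
        rw [hseg_nil (row := h) (c1 := b + 1) (c2 := d) (by omega), List.append_nil,
          getLast?_vseg h1, hc', hd']
  · rw [Lpath]
    show List.IsChain _ _
    rw [List.isChain_append]
    refine ⟨chain'_vseg, ?_, ?_⟩
    · rw [List.isChain_append]
      refine ⟨chain'_hseg, chain'_vseg, ?_⟩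
      intro p hp q hq
      rcases Nat.lt_or_ge b d with hd | hd
      rotate_left
      · rw [hseg_nil (by omega)] at hp; simp at hp
      rcases Nat.lt_or_ge h c with hc | hc
      rotate_left
      · rw [vseg_nil (by omega)] at hq; simp at hq
      rw [getLast?_hseg (by omega)] at hp
      rw [head?_vseg (by omega)] at hq
      simp only [Option.mem_def, Option.some.injEq] at hp hq
      subst hp; subst hq
      unfold AdjStep; simp only; omega
    · intro p hp q hq
      rw [getLast?_vseg h1] at hp
      obtain rfl : (h, b) = p := by simpa using hp
      rw [List.head?_append] at hq
      rcases Nat.lt_or_ge b d with hd | hd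
      · rw [head?_hseg (by omega)] at hq
        obtain rfl : (h, b + 1) = q := by simpa using hq
        unfold AdjStep; simp only; omega
      · have hd' : b = d := le_antisymm h3 hd
        rw [hseg_nil (row := h) (c1 := b + 1) (c2 := d) (by omega)] at hq
        simp only [List.head?_nil, Option.none_or] at hq
        rcases Nat.lt_or_ge h c with hc | hc
        · rw [head?_vseg (by omega)] at hq
          obtain rfl : (h + 1, d) = q := by simpa using hq
          unfold AdjStep; simp only; omega
        · rw [vseg_nil (col := d) (r1 := h + 1) (r2 := c) (by omega)] at hq
          simp at hq



lemma chain'_of_chain'_mem {α : Type*} {R S : α → α → Prop} :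
    ∀ (l : List α), l.Chain' R → (∀ u ∈ l, ∀ v ∈ l, R u v → S u v) → l.Chain' S := by
  intro l
  induction l with
  | nil => intro _ _; exact List.isChain_nil
  | cons a t ih =>
    intro hch hmem
    cases t with
    | nil => exact List.isChain_singleton a
    | cons b t' =>
      have h := List.isChain_cons_cons.mp hch
      refine List.isChain_cons_cons.mpr ⟨hmem a (by simp) b (by simp) h.1, ?_⟩
      exact ih h.2 fun u hu v hv => hmem u (by simp [hu]) v (by simp [hv])

def rskFam (m n k : ℕ) : Fin k → List (ℕ × ℕ) :=
  fun i => Lpath 1 (i.1 + 1) m (n - k + (i.1 + 1)) (m - i.1)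

lemma rskFam_isFam (m n : ℕ) (hm : 1 ≤ m) (hn : 1 ≤ n) :
    NIPathFamily m n (min m n) (rskFam m n (min m n)) := by
  constructor
  · intro i
    have hi := i.2
    exact isDirPath_Lpath (by omega) (by omega) (by omega)
  · intro i j hij p hpi hpj
    have hi := i.2
    have hj := j.2
    have hne : i.1 ≠ j.1 := fun h => hij (Fin.ext h)
    rw [rskFam, mem_Lpath] at hpi hpj
    obtain ⟨p1, p2⟩ := p
    simp only at hpi hpj
    omega

def reflPt (m : ℕ) (p : ℕ × ℕ) : ℕ × ℕ := (m + 1 - p.1, p.2)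

def dualFam (m n k : ℕ) : Fin k → List (ℕ × ℕ) :=
  fun i => (rskFam m n k i).map (reflPt m)

lemma dualFam_isFam (m n : ℕ) (hm : 1 ≤ m) (hn : 1 ≤ n) :
    NIPathFamilyDual m n (min m n) (dualFam m n (min m n)) := by
  have hfam := rskFam_isFam m n hm hn
  have hbnd : ∀ i : Fin (min m n), ∀ p ∈ rskFam m n (min m n) i, 1 ≤ p.1 ∧ p.1 ≤ m := by
    intro i p hp
    have := (dirPath_props _ _ _ _ _ (hfam.1 i)).2 p hp
    omega
  constructor
  · intro i
    obtain ⟨hlen, hh, hl, hch⟩ := hfam.1 i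
    refine ⟨?_, ?_, ?_, ?_⟩
    · rw [dualFam, List.length_map, hlen]; omega
    · rw [dualFam, List.head?_map, hh]
      simp [reflPt]
    · rw [dualFam, List.getLast?_map, hl]
      simp only [Option.map_some, reflPt]
      rw [show m + 1 - m = 1 from by omega]
    · rw [dualFam]
      show List.IsChain _ _
      rw [List.isChain_map]
      refine chain'_of_chain'_mem _ hch ?_
      intro u hu v hv huv
      have hu' := hbnd i u hu
      have hv' := hbnd i v hv
      unfold AdjStep at huv
      unfold AdjStep reflPt
      simp only at huv ⊢
      omega
  · intro i j hij p hpi hpj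
    rw [dualFam, List.mem_map] at hpi hpj
    obtain ⟨q, hq, rfl⟩ := hpi
    obtain ⟨q', hq', heq⟩ := hpj
    have h1 := hbnd i q hq
    have h2 := hbnd j q' hq'
    have : q' = q := by
      obtain ⟨a1, a2⟩ := q; obtain ⟨b1, b2⟩ := q'
      unfold reflPt at heq
      simp only [Prod.mk.injEq] at heq ⊢
      simp only at h1 h2
      omega
    subst this
    exact hfam.2 i j hij q' hq hq'



lemma coverage (x : ℕ × ℕ → NNReal) (m n k : ℕ) (hm : 1 ≤ m) (hn : 1 ≤ n) (hk : k = min m n)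
    (π : Fin k → List (ℕ × ℕ))
    (hnd : ∀ i, (π i).Nodup)
    (hlen : ∀ i, (π i).length = m + n - k)
    (hsub : ∀ i, ∀ p ∈ π i, p ∈ Finset.Icc ((1 : ℕ), (1 : ℕ)) (m, n))
    (hdisj : ∀ i j : Fin k, i ≠ j → ∀ p ∈ π i, p ∉ π j) :
    ∑ i : Fin k, ((π i).map x).sum = ∑ p ∈ Finset.Icc (1, 1) (m, n), x p := by
  have hdisj' : (↑(Finset.univ : Finset (Fin k)) : Set (Fin k)).PairwiseDisjoint
      (fun i => (π i).toFinset) := by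
    intro i _ j _ hij
    simp only [Function.onFun]
    rw [Finset.disjoint_left]
    intro p hp hp'
    rw [List.mem_toFinset] at hp hp'
    exact hdisj i j hij p hp hp'
  have hcardIcc : (Finset.Icc ((1, 1) : ℕ × ℕ) (m, n)).card = m * n := by
    rw [Finset.Icc_prod_def, Finset.card_product, Nat.card_Icc, Nat.card_Icc]
    simp
  have hcard : ((Finset.univ : Finset (Fin k)).biUnion fun i => (π i).toFinset).card
      = k * (m + n - k) := by
    rw [Finset.card_biUnion hdisj']
    have : ∀ i : Fin k, (π i).toFinset.card = m + n - k := by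
      intro i
      rw [List.toFinset_card_of_nodup (hnd i), hlen i]
    rw [Finset.sum_congr rfl fun i _ => this i]
    simp [Finset.sum_const, Finset.card_univ, mul_comm]
  have hkmn : k * (m + n - k) = m * n := by
    rcases le_total m n with h | h
    · rw [hk, min_eq_left h, show m + n - m = n from by omega]
    · rw [hk, min_eq_right h, show m + n - n = m from by omega, Nat.mul_comm]
  have hsubB : ((Finset.univ : Finset (Fin k)).biUnion fun i => (π i).toFinset)
      ⊆ Finset.Icc (1, 1) (m, n) := by
    intro p hp
    rw [Finset.mem_biUnion] at hp
    obtain ⟨i, _, hp⟩ := hp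
    exact hsub i p (List.mem_toFinset.mp hp)
  have hBeq : ((Finset.univ : Finset (Fin k)).biUnion fun i => (π i).toFinset)
      = Finset.Icc (1, 1) (m, n) :=
    Finset.eq_of_subset_of_card_le hsubB (by rw [hcardIcc, hcard, hkmn])
  rw [← hBeq, Finset.sum_biUnion hdisj']
  exact Finset.sum_congr rfl fun i _ => (List.sum_toFinset x (hnd i)).symm

lemma bounds_of_fam {m n k : ℕ} (hk : k = min m n) (hm : 1 ≤ m) (hn : 1 ≤ n)
    {π : Fin k → List (ℕ × ℕ)}
    (h : ∀ i : Fin k, IsDirPath 1 (i.1 + 1) m (n - k + (i.1 + 1)) (π i)) :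
    (∀ i, (π i).Nodup) ∧ (∀ i, (π i).length = m + n - k) ∧
    (∀ i, ∀ p ∈ π i, p ∈ Finset.Icc ((1 : ℕ), (1 : ℕ)) (m, n)) := by
  refine ⟨fun i => (dirPath_props _ _ _ _ _ (h i)).1, fun i => ?_, fun i p hp => ?_⟩
  · have := (h i).1
    have hi := i.2
    omega
  · have hb := (dirPath_props _ _ _ _ _ (h i)).2 p hp
    have hi := i.2
    rw [Finset.mem_Icc]
    constructor <;> rw [Prod.le_def] <;> constructor <;> simp only <;> omega

lemma bounds_of_fam_dual {m n k : ℕ} (hk : k = min m n) (hm : 1 ≤ m) (hn : 1 ≤ n)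
    {π : Fin k → List (ℕ × ℕ)}
    (h : ∀ i : Fin k, IsDirPath m (i.1 + 1) 1 (n - k + (i.1 + 1)) (π i)) :
    (∀ i, (π i).Nodup) ∧ (∀ i, (π i).length = m + n - k) ∧
    (∀ i, ∀ p ∈ π i, p ∈ Finset.Icc ((1 : ℕ), (1 : ℕ)) (m, n)) := by
  refine ⟨fun i => (dirPath_props _ _ _ _ _ (h i)).1, fun i => ?_, fun i p hp => ?_⟩
  · have := (h i).1
    have hi := i.2
    omega
  · have hb := (dirPath_props _ _ _ _ _ (h i)).2 p hp
    have hi := i.2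
    rw [Finset.mem_Icc]
    constructor <;> rw [Prod.le_def] <;> constructor <;> simp only <;> omega

lemma maxFlow_min (x : ℕ × ℕ → NNReal) (m n : ℕ) (hm : 1 ≤ m) (hn : 1 ≤ n) :
    maxFlow x m n (min m n) = ∑ p ∈ Finset.Icc (1, 1) (m, n), x p := by
  have hval : ∀ π : Fin (min m n) → List (ℕ × ℕ), NIPathFamily m n (min m n) π →
      ∑ i : Fin (min m n), ((π i).map x).sum = ∑ p ∈ Finset.Icc (1, 1) (m, n), x p := by
    intro π hπ
    obtain ⟨h1, h2, h3⟩ := bounds_of_fam rfl hm hn hπ.1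
    exact coverage x m n (min m n) hm hn rfl π h1 h2 h3 hπ.2
  have hset : {v | ∃ π : Fin (min m n) → List (ℕ × ℕ), NIPathFamily m n (min m n) π ∧
      v = ∑ i : Fin (min m n), ((π i).map x).sum}
      = {∑ p ∈ Finset.Icc (1, 1) (m, n), x p} := by
    ext v
    simp only [Set.mem_setOf_eq, Set.mem_singleton_iff]
    constructor
    · rintro ⟨π, hπ, rfl⟩
      exact hval π hπ
    · rintro rfl
      exact ⟨rskFam m n (min m n), rskFam_isFam m n hm hn,
        (hval _ (rskFam_isFam m n hm hn)).symm⟩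
  rw [maxFlow, hset, csSup_singleton]

lemma maxFlowDual_min (x : ℕ × ℕ → NNReal) (m n : ℕ) (hm : 1 ≤ m) (hn : 1 ≤ n) :
    maxFlowDual x m n (min m n) = ∑ p ∈ Finset.Icc (1, 1) (m, n), x p := by
  have hval : ∀ π : Fin (min m n) → List (ℕ × ℕ), NIPathFamilyDual m n (min m n) π →
      ∑ i : Fin (min m n), ((π i).map x).sum = ∑ p ∈ Finset.Icc (1, 1) (m, n), x p := by
    intro π hπ
    obtain ⟨h1, h2, h3⟩ := bounds_of_fam_dual rfl hm hn hπ.1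
    exact coverage x m n (min m n) hm hn rfl π h1 h2 h3 hπ.2
  have hset : {v | ∃ π : Fin (min m n) → List (ℕ × ℕ), NIPathFamilyDual m n (min m n) π ∧
      v = ∑ i : Fin (min m n), ((π i).map x).sum}
      = {∑ p ∈ Finset.Icc (1, 1) (m, n), x p} := by
    ext v
    simp only [Set.mem_setOf_eq, Set.mem_singleton_iff]
    constructor
    · rintro ⟨π, hπ, rfl⟩
      exact hval π hπ
    · rintro rfl
      exact ⟨dualFam m n (min m n), dualFam_isFam m n hm hn,
        (hval _ (dualFam_isFam m n hm hn)).symm⟩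
  rw [maxFlowDual, hset, csSup_singleton]

def rowLenF (lam : Finset (ℕ × ℕ)) (m : ℕ) : ℕ :=
  lam.sup fun q => if q.1 = m then q.2 else 0

def diagInd (m n : ℕ) (p : ℕ × ℕ) : ℤ :=
  if p.1 ≤ m ∧ p.2 ≤ n ∧ m - p.1 = n - p.2 ∧ m - p.1 < min m n then 1 else 0

def omegaC (lam : Finset (ℕ × ℕ)) : ℕ × ℕ → ℤ := fun p =>
  ∑ m ∈ Finset.Icc 1 (lam.sup fun q => q.1),
    (diagInd m (rowLenF lam m) p - diagInd m (rowLenF lam (m + 1)) p)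

lemma sum_sub_telescope (G : ℕ → ℝ) (a : ℕ) : ∀ M : ℕ, 1 ≤ a → a ≤ M →
    ∑ m ∈ Finset.Icc 1 M, ((if a ≤ m then G m else 0) - (if a ≤ m then G (m + 1) else 0))
      = G a - G (M + 1) := by
  intro M
  induction M with
  | zero => intro h1 h2; omega
  | succ M ih =>
    intro h1 h2
    rw [Finset.sum_Icc_succ_top (by omega : 1 ≤ M + 1)]
    rcases Nat.lt_or_ge M a with h | h
    · have ha : a = M + 1 := by omega
      have hz : ∑ m ∈ Finset.Icc 1 M, ((if a ≤ m then G m else 0)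
          - (if a ≤ m then G (m + 1) else 0)) = 0 := by
        apply Finset.sum_eq_zero
        intro m hm
        rw [Finset.mem_Icc] at hm
        rw [if_neg (by omega), if_neg (by omega)]
        ring
      rw [hz, zero_add, if_pos (by omega), if_pos (by omega), ha]
    · rw [ih h1 h, if_pos (by omega), if_pos (by omega)]
      ring

section
variable {lam : Finset (ℕ × ℕ)} (hlam : IsYoungDiagram lam)

include hlam

lemma rowLenF_mem {p : ℕ × ℕ} (hp : p ∈ lam) : p.2 ≤ rowLenF lam p.1 := by
  have := Finset.le_sup (f := fun q : ℕ × ℕ => if q.1 = p.1 then q.2 else 0) hp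
  simp only [if_pos rfl] at this
  exact this

lemma rowLenF_rev {m j : ℕ} (hm : 1 ≤ m) (hj : 1 ≤ j) (hle : j ≤ rowLenF lam m) :
    (m, j) ∈ lam := by
  have hex : ∃ q ∈ lam, j ≤ (if q.1 = m then q.2 else 0) := by
    by_contra hcon
    push_neg at hcon
    have : rowLenF lam m < j :=
      (Finset.sup_lt_iff (show (0 : ℕ) < j from hj)).mpr fun q hq => hcon q hq
    omega
  obtain ⟨q, hq, hfq⟩ := hex
  have hq1 : q.1 = m := by
    by_contra hne
    rw [if_neg hne] at hfq
    omega
  rw [if_pos hq1] at hfq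
  apply (hlam q hq).2.2
  rw [Finset.mem_Icc]
  constructor
  · rw [Prod.le_def]; exact ⟨hm, hj⟩
  · rw [Prod.le_def]; exact ⟨by omega, hfq⟩

lemma rowLenF_top : rowLenF lam ((lam.sup fun q => q.1) + 1) = 0 := by
  apply Nat.eq_zero_of_le_zero
  apply Finset.sup_le
  intro q hq
  have : q.1 ≤ lam.sup fun q => q.1 := Finset.le_sup (f := fun q : ℕ × ℕ => q.1) hq
  rw [if_neg (by omega)]

lemma border1 {m : ℕ} (hm : 1 ≤ m) (h1 : 1 ≤ rowLenF lam m) :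
    (m, rowLenF lam m) ∈ lam ∧ (m + 1, rowLenF lam m + 1) ∉ lam := by
  refine ⟨rowLenF_rev hlam hm h1 le_rfl, fun hmem => ?_⟩
  have h2 : (m, rowLenF lam m + 1) ∈ lam := by
    apply (hlam _ hmem).2.2
    rw [Finset.mem_Icc, Prod.le_def, Prod.le_def]
    exact ⟨⟨hm, by omega⟩, ⟨by omega, le_rfl⟩⟩
  have := rowLenF_mem hlam h2
  simp only at this
  omega

lemma border2 {m : ℕ} (hm : 1 ≤ m) (h1 : 1 ≤ rowLenF lam (m + 1)) :
    (m, rowLenF lam (m + 1)) ∈ lam ∧ (m + 1, rowLenF lam (m + 1) + 1) ∉ lam := by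
  constructor
  · have h2 : (m + 1, rowLenF lam (m + 1)) ∈ lam := rowLenF_rev hlam (by omega) h1 le_rfl
    apply (hlam _ h2).2.2
    rw [Finset.mem_Icc, Prod.le_def, Prod.le_def]
    exact ⟨⟨hm, h1⟩, ⟨by omega, le_rfl⟩⟩
  · intro hmem
    have := rowLenF_mem hlam hmem
    simp only at this
    omega

lemma diagSum (r : ℕ × ℕ → NNReal) (X : ℕ × ℕ → ℝ) {m n : ℕ} (hm : 1 ≤ m)
    (hcase : n = 0 ∨ ((m, n) ∈ lam ∧ (m + 1, n + 1) ∉ lam))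
    (hrect : (m, n) ∈ lam → (m + 1, n + 1) ∉ lam →
      ∑ i ∈ Finset.range (min m n), ((r (m - i, n - i) : ℝ)) = ∑ p ∈ Finset.Icc (1, 1) (m, n), X p) :
    ∑ p ∈ lam, (diagInd m n p : ℝ) * (r p : ℝ) = ∑ p ∈ Finset.Icc (1, 1) (m, n), X p := by
  rcases hcase with rfl | ⟨hmem, hnot⟩
  · rw [Finset.Icc_eq_empty (by
      rw [Prod.le_def]
      simp), Finset.sum_empty]
    apply Finset.sum_eq_zero
    intro p _
    rw [diagInd, if_neg (by omega)]
    simp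
  · have hn : 1 ≤ n := (hlam _ hmem).2.1
    rw [← hrect hmem hnot]
    have hstep : ∀ p ∈ lam, (diagInd m n p : ℝ) * (r p : ℝ)
        = if p.1 ≤ m ∧ p.2 ≤ n ∧ m - p.1 = n - p.2 ∧ m - p.1 < min m n then (r p : ℝ) else 0 := by
      intro p _
      rw [diagInd]
      split <;> simp
    rw [Finset.sum_congr rfl hstep, ← Finset.sum_filter]
    have hfilt : lam.filter
        (fun p => p.1 ≤ m ∧ p.2 ≤ n ∧ m - p.1 = n - p.2 ∧ m - p.1 < min m n)
        = (Finset.range (min m n)).image fun i => (m - i, n - i) := by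
      ext q
      simp only [Finset.mem_filter, Finset.mem_image, Finset.mem_range]
      constructor
      · rintro ⟨hq, h1, h2, h3, h4⟩
        refine ⟨m - q.1, h4, ?_⟩
        obtain ⟨q1, q2⟩ := q
        simp only [Prod.mk.injEq] at *
        omega
      · rintro ⟨i, hi, rfl⟩
        constructor
        · apply (hlam _ hmem).2.2
          rw [Finset.mem_Icc, Prod.le_def, Prod.le_def]
          simp only
          refine ⟨⟨by omega, by omega⟩, by omega, by omega⟩
        · simp only
          omega
    have hinj : ∀ i ∈ Finset.range (min m n), ∀ j ∈ Finset.range (min m n),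
        (fun i => ((m - i, n - i) : ℕ × ℕ)) i = (fun i => ((m - i, n - i) : ℕ × ℕ)) j → i = j := by
      intro i hi j hj hij
      simp only [Finset.mem_range] at hi hj
      simp only [Prod.mk.injEq] at hij
      omega
    rw [hfilt, Finset.sum_image hinj]

lemma rectFilter (X : ℕ × ℕ → ℝ) {m n : ℕ} (hcase : n = 0 ∨ (m, n) ∈ lam) :
    ∑ p ∈ Finset.Icc (1, 1) (m, n), X p
      = ∑ p ∈ lam, (if p.1 ≤ m ∧ p.2 ≤ n then X p else 0) := by
  rw [← Finset.sum_filter]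
  apply Finset.sum_congr _ fun _ _ => rfl
  ext q
  simp only [Finset.mem_Icc, Finset.mem_filter, Prod.le_def]
  constructor
  · rintro ⟨⟨ha, hb⟩, hc, hd⟩
    refine ⟨?_, hc, hd⟩
    rcases hcase with rfl | hmem
    · omega
    · apply (hlam _ hmem).2.2
      rw [Finset.mem_Icc, Prod.le_def, Prod.le_def]
      exact ⟨⟨ha, hb⟩, hc, hd⟩
  · rintro ⟨hq, hc, hd⟩
    have := hlam _ hq
    exact ⟨⟨this.1, this.2.1⟩, hc, hd⟩

lemma key (r : ℕ × ℕ → NNReal) (X : ℕ × ℕ → ℝ)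
    (hrect : ∀ m n : ℕ, (m, n) ∈ lam → (m + 1, n + 1) ∉ lam →
      ∑ i ∈ Finset.range (min m n), ((r (m - i, n - i) : ℝ))
        = ∑ p ∈ Finset.Icc (1, 1) (m, n), X p) :
    ∑ p ∈ lam, (omegaC lam p : ℝ) * (r p : ℝ) = ∑ p ∈ lam, X p := by
  set M := lam.sup fun q => q.1 with hM
  have h1 : ∑ p ∈ lam, (omegaC lam p : ℝ) * (r p : ℝ)
      = ∑ p ∈ lam, ∑ m ∈ Finset.Icc 1 M,
          (((diagInd m (rowLenF lam m) p : ℝ) - (diagInd m (rowLenF lam (m + 1)) p : ℝ))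
            * (r p : ℝ)) := by
    apply Finset.sum_congr rfl
    intro p _
    rw [omegaC]
    push_cast
    rw [Finset.sum_mul]
  rw [h1, Finset.sum_comm]
  have h2 : ∀ m ∈ Finset.Icc 1 M,
      ∑ p ∈ lam, (((diagInd m (rowLenF lam m) p : ℝ) - (diagInd m (rowLenF lam (m + 1)) p : ℝ))
          * (r p : ℝ))
      = (∑ p ∈ lam, (if p.1 ≤ m ∧ p.2 ≤ rowLenF lam m then X p else 0))
        - (∑ p ∈ lam, (if p.1 ≤ m ∧ p.2 ≤ rowLenF lam (m + 1) then X p else 0)) := by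
    intro m hm
    rw [Finset.mem_Icc] at hm
    have hd1 : ∑ p ∈ lam, (diagInd m (rowLenF lam m) p : ℝ) * (r p : ℝ)
        = ∑ p ∈ Finset.Icc (1, 1) (m, rowLenF lam m), X p := by
      apply diagSum hlam r X hm.1 _ (fun hmem hnot => hrect m _ hmem hnot)
      rcases Nat.eq_zero_or_pos (rowLenF lam m) with h | h
      · exact Or.inl h
      · exact Or.inr (border1 hlam hm.1 h)
    have hd2 : ∑ p ∈ lam, (diagInd m (rowLenF lam (m + 1)) p : ℝ) * (r p : ℝ)
        = ∑ p ∈ Finset.Icc (1, 1) (m, rowLenF lam (m + 1)), X p := by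
      apply diagSum hlam r X hm.1 _ (fun hmem hnot => hrect m _ hmem hnot)
      rcases Nat.eq_zero_or_pos (rowLenF lam (m + 1)) with h | h
      · exact Or.inl h
      · exact Or.inr (border2 hlam hm.1 h)
    have e1 : ∑ p ∈ Finset.Icc (1, 1) (m, rowLenF lam m), X p
        = ∑ p ∈ lam, (if p.1 ≤ m ∧ p.2 ≤ rowLenF lam m then X p else 0) := by
      apply rectFilter hlam
      rcases Nat.eq_zero_or_pos (rowLenF lam m) with h | h
      · exact Or.inl h
      · exact Or.inr (border1 hlam hm.1 h).1
    have e2 : ∑ p ∈ Finset.Icc (1, 1) (m, rowLenF lam (m + 1)), X p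
        = ∑ p ∈ lam, (if p.1 ≤ m ∧ p.2 ≤ rowLenF lam (m + 1) then X p else 0) := by
      apply rectFilter hlam
      rcases Nat.eq_zero_or_pos (rowLenF lam (m + 1)) with h | h
      · exact Or.inl h
      · exact Or.inr (border2 hlam hm.1 h).1
    calc ∑ p ∈ lam, (((diagInd m (rowLenF lam m) p : ℝ)
            - (diagInd m (rowLenF lam (m + 1)) p : ℝ)) * (r p : ℝ))
        = ∑ p ∈ lam, ((diagInd m (rowLenF lam m) p : ℝ) * (r p : ℝ)
            - (diagInd m (rowLenF lam (m + 1)) p : ℝ) * (r p : ℝ)) := by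
          apply Finset.sum_congr rfl
          intro p _
          ring
      _ = _ := by
          rw [Finset.sum_sub_distrib, hd1, hd2, e1, e2]
  rw [Finset.sum_congr rfl h2]
  have h3 : ∑ m ∈ Finset.Icc 1 M,
      ((∑ p ∈ lam, (if p.1 ≤ m ∧ p.2 ≤ rowLenF lam m then X p else 0))
        - (∑ p ∈ lam, (if p.1 ≤ m ∧ p.2 ≤ rowLenF lam (m + 1) then X p else 0)))
      = ∑ p ∈ lam, ∑ m ∈ Finset.Icc 1 M,
          ((if p.1 ≤ m ∧ p.2 ≤ rowLenF lam m then X p else 0)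
            - (if p.1 ≤ m ∧ p.2 ≤ rowLenF lam (m + 1) then X p else 0)) := by
    calc ∑ m ∈ Finset.Icc 1 M,
        ((∑ p ∈ lam, (if p.1 ≤ m ∧ p.2 ≤ rowLenF lam m then X p else 0))
          - (∑ p ∈ lam, (if p.1 ≤ m ∧ p.2 ≤ rowLenF lam (m + 1) then X p else 0)))
        = ∑ m ∈ Finset.Icc 1 M, ∑ p ∈ lam,
            ((if p.1 ≤ m ∧ p.2 ≤ rowLenF lam m then X p else 0)
              - (if p.1 ≤ m ∧ p.2 ≤ rowLenF lam (m + 1) then X p else 0)) :=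
          Finset.sum_congr rfl fun m _ => (Finset.sum_sub_distrib _ _).symm
      _ = _ := Finset.sum_comm
  rw [h3]
  apply Finset.sum_congr rfl
  intro p hp
  have hp1 : 1 ≤ p.1 := (hlam p hp).1
  have hp2 : 1 ≤ p.2 := (hlam p hp).2.1
  have hpM : p.1 ≤ M := Finset.le_sup (f := fun q : ℕ × ℕ => q.1) hp
  have hpL : p.2 ≤ rowLenF lam p.1 := rowLenF_mem hlam hp
  have hLM : rowLenF lam (M + 1) = 0 := rowLenF_top hlam
  -- telescope
  have hnest : ∀ m ∈ Finset.Icc 1 M,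
      ((if p.1 ≤ m ∧ p.2 ≤ rowLenF lam m then X p else 0)
        - (if p.1 ≤ m ∧ p.2 ≤ rowLenF lam (m + 1) then X p else 0))
      = ((if p.1 ≤ m then (if p.2 ≤ rowLenF lam m then X p else 0) else 0)
        - (if p.1 ≤ m then (if p.2 ≤ rowLenF lam (m + 1) then X p else 0) else 0)) := by
    intro m _
    rw [← ite_and, ← ite_and]
  rw [Finset.sum_congr rfl hnest,
    sum_sub_telescope (fun j => if p.2 ≤ rowLenF lam j then X p else 0) p.1 M hp1 hpM]
  show (if p.2 ≤ rowLenF lam p.1 then X p else 0)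
    - (if p.2 ≤ rowLenF lam (M + 1) then X p else 0) = X p
  rw [if_pos hpL, hLM, if_neg (by omega)]
  ring

end


/-- **Theorem.** For any Young diagram `λ` there are integer coefficients `ω` such that
for any tableau `x` of shape `λ` with entries in `ℝ≥0`, any `r` satisfying the RSK
relations and any `b` satisfying the Burge relations w.r.t. `x` obey
`Σ ω_{i,j} r_{i,j} = Σ x_{i,j} = Σ ω_{i,j} b_{i,j}` (sums over `λ`). -/
theorem exists_int_coeffs_sum_RSK_eq_sum_eq_sum_Burge
    (lam : Finset (ℕ × ℕ)) (hlam : IsYoungDiagram lam) :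
    ∃ ω : ℕ × ℕ → ℤ, ∀ x r b : ℕ × ℕ → NNReal,
      SatisfiesRSKRel lam x r → SatisfiesBurgeRel lam x b →
      (∑ p ∈ lam, (ω p : ℝ) * (r p : ℝ)) = (∑ p ∈ lam, (x p : ℝ)) ∧
      (∑ p ∈ lam, (x p : ℝ)) = ∑ p ∈ lam, (ω p : ℝ) * (b p : ℝ) := by
  refine ⟨omegaC lam, ?_⟩
  intro x r b hr hb
  have hrect_r : ∀ m n : ℕ, (m, n) ∈ lam → (m + 1, n + 1) ∉ lam →
      ∑ i ∈ Finset.range (min m n), ((r (m - i, n - i) : ℝ))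
        = ∑ p ∈ Finset.Icc (1, 1) (m, n), ((x p : ℝ)) := by
    intro m n hmem hnot
    have hm : 1 ≤ m := (hlam _ hmem).1
    have hn : 1 ≤ n := (hlam _ hmem).2.1
    have h := hr m n hmem hnot (min m n) (by omega) le_rfl
    rw [maxFlow_min x m n hm hn] at h
    have h2 := congrArg (fun t : NNReal => (t : ℝ)) h
    push_cast at h2
    exact h2
  have hrect_b : ∀ m n : ℕ, (m, n) ∈ lam → (m + 1, n + 1) ∉ lam →
      ∑ i ∈ Finset.range (min m n), ((b (m - i, n - i) : ℝ))
        = ∑ p ∈ Finset.Icc (1, 1) (m, n), ((x p : ℝ)) := by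
    intro m n hmem hnot
    have hm : 1 ≤ m := (hlam _ hmem).1
    have hn : 1 ≤ n := (hlam _ hmem).2.1
    have h := hb m n hmem hnot (min m n) (by omega) le_rfl
    rw [maxFlowDual_min x m n hm hn] at h
    have h2 := congrArg (fun t : NNReal => (t : ℝ)) h
    push_cast at h2
    exact h2
  exact ⟨key hlam r (fun p => (x p : ℝ)) hrect_r,
    (key hlam b (fun p => (x p : ℝ)) hrect_b).symm⟩
end

section
/- Let λ be a Young diagram, p ∈ (0,1), and let X = (X_{i,j})_{(i,j)∈λ} be i.i.d. Geometric(p) random variables. Let R and B be bijections from the set of tableaux of shape λ with entries in ℤ≥0 onto the set of interlacing tableaux of shape λ with entries in ℤ≥0 such that, for every tableau x, R(x) satisfies the RSK relations with respect to x and B(x) satisfies the Burge relations with respect to x. Then R(X) and B(X) have the same distribution. -/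
open MeasureTheory ProbabilityTheory

lemma dist_le_length : ∀ (π : List (ℕ × ℕ)), π.Chain' AdjStep →
    ∀ p q : ℕ × ℕ, π.head? = some p → π.getLast? = some q →
    ((q.1 : ℤ) - p.1).natAbs + ((q.2 : ℤ) - p.2).natAbs + 1 ≤ π.length := by
  intro π
  induction π with
  | nil => intro _ p q hp hq; simp at hp
  | cons hd tl ih =>
    intro hch p q hp hq
    simp at hp; subst hp
    cases tl with
    | nil =>
      simp at hq; subst hq; simp
    | cons hd' tl' =>
      rw [List.Chain', List.isChain_cons_cons] at hch
      have h1 : AdjStep hd hd' := hch.1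
      have h2 := ih hch.2 hd' q rfl (by
        rw [List.getLast?_cons_cons] at hq; exact hq)
      unfold AdjStep at h1
      simp only [List.length_cons] at *
      omega

lemma primal_struct : ∀ (π : List (ℕ × ℕ)) (a b c d : ℕ), a ≤ c → b ≤ d →
    IsDirPath a b c d π →
    π.Nodup ∧ ∀ q ∈ π, a ≤ q.1 ∧ q.1 ≤ c ∧ b ≤ q.2 ∧ q.2 ≤ d := by
  intro π
  induction π with
  | nil => intro a b c d hac hbd h; simp [IsDirPath] at h
  | cons hd tl ih =>
    intro a b c d hac hbd h
    obtain ⟨hlen, hhead, hlast, hch⟩ := h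
    simp at hhead; subst hhead
    cases tl with
    | nil =>
      simp at hlast
      constructor
      · simp
      · intro q hq; simp at hq; subst hq
        obtain ⟨h1, h2⟩ := hlast
        subst h1; subst h2; simp
    | cons hd' tl' =>
      rw [List.Chain', List.isChain_cons_cons] at hch
      have hadj : AdjStep (a, b) hd' := hch.1
      have hdist := dist_le_length _ hch.2 hd' (c, d) rfl
        (by rw [List.getLast?_cons_cons] at hlast; exact hlast)
      unfold AdjStep at hadj
      simp only [List.length_cons] at hlen hdist
      -- derive step structure
      have hkey : a ≤ hd'.1 ∧ hd'.1 ≤ c ∧ b ≤ hd'.2 ∧ hd'.2 ≤ d ∧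
          hd'.1 + hd'.2 = a + b + 1 ∧
          (hd' :: tl').length = ((c : ℤ) - hd'.1).natAbs + ((d : ℤ) - hd'.2).natAbs + 1 := by
        simp only [List.length_cons] at *
        refine ⟨?_, ?_, ?_, ?_, ?_, ?_⟩ <;> omega
      obtain ⟨h1, h2, h3, h4, h5, hlen'⟩ := hkey
      have := ih hd'.1 hd'.2 c d h2 h4 ⟨hlen', by simp, by
        rw [List.getLast?_cons_cons] at hlast; exact hlast, hch.2⟩
      obtain ⟨hnd, hbound⟩ := this
      constructor
      · refine List.nodup_cons.mpr ⟨?_, hnd⟩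
        intro hmem
        have := hbound _ hmem
        omega
      · intro q hq
        rcases List.mem_cons.mp hq with rfl | hq
        · exact ⟨le_refl _, hac, le_refl _, hbd⟩
        · have := hbound q hq; omega

lemma dual_struct : ∀ (π : List (ℕ × ℕ)) (a b c d : ℕ), c ≤ a → b ≤ d →
    IsDirPath a b c d π →
    π.Nodup ∧ ∀ q ∈ π, c ≤ q.1 ∧ q.1 ≤ a ∧ b ≤ q.2 ∧ q.2 ≤ d := by
  intro π
  induction π with
  | nil => intro a b c d hac hbd h; simp [IsDirPath] at h
  | cons hd tl ih =>
    intro a b c d hac hbd h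
    obtain ⟨hlen, hhead, hlast, hch⟩ := h
    simp at hhead; subst hhead
    cases tl with
    | nil =>
      simp at hlast
      constructor
      · simp
      · intro q hq; simp at hq; subst hq
        obtain ⟨h1, h2⟩ := hlast
        subst h1; subst h2; simp
    | cons hd' tl' =>
      rw [List.Chain', List.isChain_cons_cons] at hch
      have hadj : AdjStep (a, b) hd' := hch.1
      have hdist := dist_le_length _ hch.2 hd' (c, d) rfl
        (by rw [List.getLast?_cons_cons] at hlast; exact hlast)
      unfold AdjStep at hadj
      have hkey : c ≤ hd'.1 ∧ hd'.1 ≤ a ∧ b ≤ hd'.2 ∧ hd'.2 ≤ d ∧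
          hd'.2 + a = hd'.1 + b + 1 ∧
          (hd' :: tl').length = ((c : ℤ) - hd'.1).natAbs + ((d : ℤ) - hd'.2).natAbs + 1 := by
        simp only [List.length_cons] at *
        refine ⟨?_, ?_, ?_, ?_, ?_, ?_⟩ <;> omega
      obtain ⟨h1, h2, h3, h4, h5, hlen'⟩ := hkey
      have := ih hd'.1 hd'.2 c d h1 h4 ⟨hlen', by simp, by
        rw [List.getLast?_cons_cons] at hlast; exact hlast, hch.2⟩
      obtain ⟨hnd, hbound⟩ := this
      constructor
      · refine List.nodup_cons.mpr ⟨?_, hnd⟩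
        intro hmem
        have := hbound _ hmem
        omega
      · intro q hq
        rcases List.mem_cons.mp hq with rfl | hq
        · exact ⟨hac, le_refl _, le_refl _, hbd⟩
        · have := hbound q hq; omega

lemma family_cover_sum (x : ℕ × ℕ → ℕ) (m n k : ℕ) (h1m : 1 ≤ m) (h1n : 1 ≤ n)
    (hk : k = min m n) (π : Fin k → List (ℕ × ℕ)) (hfam : NIPathFamily m n k π) :
    ∑ i : Fin k, ((π i).map x).sum = ∑ q ∈ Finset.Icc ((1:ℕ), (1:ℕ)) (m, n), x q := by
  obtain ⟨hpath, hdisj⟩ := hfam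
  have hkm : k ≤ m := by omega
  have hkn : k ≤ n := by omega
  have hstruct : ∀ i : Fin k, (π i).Nodup ∧
      ∀ q ∈ π i, 1 ≤ q.1 ∧ q.1 ≤ m ∧ i.1 + 1 ≤ q.2 ∧ q.2 ≤ n - k + (i.1 + 1) :=
    fun i => primal_struct _ 1 (i.1 + 1) m (n - k + (i.1 + 1)) h1m (by omega) (hpath i)
  have hlen : ∀ i : Fin k, (π i).length = m + n - k := by
    intro i
    have := (hpath i).1
    omega
  have hdisjF : ∀ i ∈ (Finset.univ : Finset (Fin k)), ∀ j ∈ Finset.univ, i ≠ j →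
      Disjoint (π i).toFinset (π j).toFinset := by
    intro i _ j _ hij
    rw [Finset.disjoint_left]
    intro p hp hq
    exact hdisj i j hij p (List.mem_toFinset.mp hp) (List.mem_toFinset.mp hq)
  set F := Finset.univ.biUnion (fun i : Fin k => (π i).toFinset) with hF
  have hcardF : F.card = k * (m + n - k) := by
    rw [Finset.card_biUnion hdisjF]
    have : ∀ i : Fin k, (π i).toFinset.card = m + n - k := by
      intro i
      rw [List.toFinset_card_of_nodup (hstruct i).1, hlen i]
    simp [this]
  have hsub : F ⊆ Finset.Icc ((1:ℕ), (1:ℕ)) (m, n) := by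
    intro q hq
    rw [hF, Finset.mem_biUnion] at hq
    obtain ⟨i, -, hq⟩ := hq
    have := (hstruct i).2 q (List.mem_toFinset.mp hq)
    have hin : i.1 < k := i.2
    rw [Finset.Icc_prod_def, Finset.mem_product, Finset.mem_Icc, Finset.mem_Icc]
    omega
  have hcardIcc : (Finset.Icc ((1:ℕ), (1:ℕ)) (m, n)).card = m * n := by
    rw [Finset.card_Icc_prod]
    simp [Nat.card_Icc]
  have hmn : k * (m + n - k) = m * n := by
    rcases Nat.le_total m n with h | h
    · have h1 : k = m := by omega
      have h2 : m + n - k = n := by omega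
      subst h1; rw [h2]
    · have h1 : k = n := by omega
      have h2 : m + n - k = m := by omega
      subst h1; rw [h2, Nat.mul_comm]
  have hFeq : F = Finset.Icc ((1:ℕ), (1:ℕ)) (m, n) :=
    Finset.eq_of_subset_of_card_le hsub (by rw [hcardF, hcardIcc, hmn])
  calc ∑ i : Fin k, ((π i).map x).sum
      = ∑ i : Fin k, ∑ q ∈ (π i).toFinset, x q := by
        refine Finset.sum_congr rfl fun i _ => ?_
        rw [List.sum_toFinset _ (hstruct i).1]
    _ = ∑ q ∈ F, x q := (Finset.sum_biUnion hdisjF).symm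
    _ = _ := by rw [hFeq]

lemma family_cover_sum_dual (x : ℕ × ℕ → ℕ) (m n k : ℕ) (h1m : 1 ≤ m) (h1n : 1 ≤ n)
    (hk : k = min m n) (π : Fin k → List (ℕ × ℕ)) (hfam : NIPathFamilyDual m n k π) :
    ∑ i : Fin k, ((π i).map x).sum = ∑ q ∈ Finset.Icc ((1:ℕ), (1:ℕ)) (m, n), x q := by
  obtain ⟨hpath, hdisj⟩ := hfam
  have hkm : k ≤ m := by omega
  have hkn : k ≤ n := by omega
  have hstruct : ∀ i : Fin k, (π i).Nodup ∧
      ∀ q ∈ π i, 1 ≤ q.1 ∧ q.1 ≤ m ∧ i.1 + 1 ≤ q.2 ∧ q.2 ≤ n - k + (i.1 + 1) :=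
    fun i => dual_struct _ m (i.1 + 1) 1 (n - k + (i.1 + 1)) h1m (by omega) (hpath i)
  have hlen : ∀ i : Fin k, (π i).length = m + n - k := by
    intro i
    have := (hpath i).1
    omega
  have hdisjF : ∀ i ∈ (Finset.univ : Finset (Fin k)), ∀ j ∈ Finset.univ, i ≠ j →
      Disjoint (π i).toFinset (π j).toFinset := by
    intro i _ j _ hij
    rw [Finset.disjoint_left]
    intro p hp hq
    exact hdisj i j hij p (List.mem_toFinset.mp hp) (List.mem_toFinset.mp hq)
  set F := Finset.univ.biUnion (fun i : Fin k => (π i).toFinset) with hF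
  have hcardF : F.card = k * (m + n - k) := by
    rw [Finset.card_biUnion hdisjF]
    have : ∀ i : Fin k, (π i).toFinset.card = m + n - k := by
      intro i
      rw [List.toFinset_card_of_nodup (hstruct i).1, hlen i]
    simp [this]
  have hsub : F ⊆ Finset.Icc ((1:ℕ), (1:ℕ)) (m, n) := by
    intro q hq
    rw [hF, Finset.mem_biUnion] at hq
    obtain ⟨i, -, hq⟩ := hq
    have := (hstruct i).2 q (List.mem_toFinset.mp hq)
    have hin : i.1 < k := i.2
    rw [Finset.Icc_prod_def, Finset.mem_product, Finset.mem_Icc, Finset.mem_Icc]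
    omega
  have hcardIcc : (Finset.Icc ((1:ℕ), (1:ℕ)) (m, n)).card = m * n := by
    rw [Finset.card_Icc_prod]
    simp [Nat.card_Icc]
  have hmn : k * (m + n - k) = m * n := by
    rcases Nat.le_total m n with h | h
    · have h1 : k = m := by omega
      have h2 : m + n - k = n := by omega
      subst h1; rw [h2]
    · have h1 : k = n := by omega
      have h2 : m + n - k = m := by omega
      subst h1; rw [h2, Nat.mul_comm]
  have hFeq : F = Finset.Icc ((1:ℕ), (1:ℕ)) (m, n) :=
    Finset.eq_of_subset_of_card_le hsub (by rw [hcardF, hcardIcc, hmn])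
  calc ∑ i : Fin k, ((π i).map x).sum
      = ∑ i : Fin k, ∑ q ∈ (π i).toFinset, x q := by
        refine Finset.sum_congr rfl fun i _ => ?_
        rw [List.sum_toFinset _ (hstruct i).1]
    _ = ∑ q ∈ F, x q := (Finset.sum_biUnion hdisjF).symm
    _ = _ := by rw [hFeq]

def ppathFun (m n k i : ℕ) : ℕ → ℕ × ℕ := fun s =>
  if s < m - i then (1 + s, i + 1)
  else if s < m - i + (n - k) then (m - i, i + 2 + (s - (m - i)))
  else (m - i + 1 + (s - (m - i) - (n - k)), n - k + i + 1)

def ppath (m n k i : ℕ) : List (ℕ × ℕ) := (List.range (m + n - k)).map (ppathFun m n k i)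

lemma ppath_isDirPath {m n k i : ℕ} (hik : i < k) (hkm : k ≤ m) (hkn : k ≤ n) :
    IsDirPath 1 (i + 1) m (n - k + (i + 1)) (ppath m n k i) := by
  have hL : 1 ≤ m + n - k := by omega
  refine ⟨by simp [ppath]; omega, ?_, ?_, ?_⟩
  · rw [ppath, List.head?_eq_getElem?, List.getElem?_map, List.getElem?_range (by omega)]
    simp only [Option.map_some]
    congr 1
    unfold ppathFun
    rw [if_pos (by omega)]
  · rw [ppath, List.getLast?_eq_getElem?]
    simp only [List.length_map, List.length_range]
    rw [List.getElem?_map, List.getElem?_range (by omega)]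
    simp only [Option.map_some]
    congr 1
    unfold ppathFun
    split_ifs <;> (refine Prod.ext ?_ ?_ <;> simp <;> omega)
  · rw [ppath, List.Chain', List.isChain_map]
    obtain ⟨L, hLeq⟩ : ∃ L, m + n - k = L + 1 := ⟨m + n - k - 1, by omega⟩
    rw [hLeq]
    rw [List.isChain_range_succ]
    intro s hs
    unfold AdjStep ppathFun
    split_ifs <;> simp <;> omega

lemma ppath_family {m n k : ℕ} (hkm : k ≤ m) (hkn : k ≤ n) :
    NIPathFamily m n k (fun i : Fin k => ppath m n k i.1) := by
  constructor
  · exact fun i => ppath_isDirPath i.2 hkm hkn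
  · intro i j hij p hpi hpj
    have hij' : i.1 ≠ j.1 := fun h => hij (Fin.ext h)
    have hi := i.2; have hj := j.2
    simp only [ppath, List.mem_map, List.mem_range] at hpi hpj
    obtain ⟨s, hs, hps⟩ := hpi
    obtain ⟨t, ht, hpt⟩ := hpj
    rw [← hps] at hpt
    unfold ppathFun at hpt
    split_ifs at hpt <;>
      (rw [Prod.ext_iff] at hpt; simp only at hpt; omega)

def dpathFun (m n k i : ℕ) : ℕ → ℕ × ℕ := fun s =>
  if s < m - i then (m - s, i + 1)
  else if s < m - i + (n - k) then (i + 1, i + 2 + (s - (m - i)))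
  else (i - (s - (m - i) - (n - k)), n - k + i + 1)

def dpath (m n k i : ℕ) : List (ℕ × ℕ) := (List.range (m + n - k)).map (dpathFun m n k i)

lemma dpath_isDirPath {m n k i : ℕ} (hik : i < k) (hkm : k ≤ m) (hkn : k ≤ n) :
    IsDirPath m (i + 1) 1 (n - k + (i + 1)) (dpath m n k i) := by
  have hL : 1 ≤ m + n - k := by omega
  refine ⟨by simp [dpath]; omega, ?_, ?_, ?_⟩
  · rw [dpath, List.head?_eq_getElem?, List.getElem?_map, List.getElem?_range (by omega)]
    simp only [Option.map_some]
    congr 1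
    unfold dpathFun
    rw [if_pos (by omega)]
    simp
  · rw [dpath, List.getLast?_eq_getElem?]
    simp only [List.length_map, List.length_range]
    rw [List.getElem?_map, List.getElem?_range (by omega)]
    simp only [Option.map_some]
    congr 1
    unfold dpathFun
    split_ifs <;> (refine Prod.ext ?_ ?_ <;> simp <;> omega)
  · rw [dpath, List.Chain', List.isChain_map]
    obtain ⟨L, hLeq⟩ : ∃ L, m + n - k = L + 1 := ⟨m + n - k - 1, by omega⟩
    rw [hLeq]
    rw [List.isChain_range_succ]
    intro s hs
    unfold AdjStep dpathFun
    split_ifs <;> simp <;> omega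

lemma dpath_family {m n k : ℕ} (hkm : k ≤ m) (hkn : k ≤ n) :
    NIPathFamilyDual m n k (fun i : Fin k => dpath m n k i.1) := by
  constructor
  · exact fun i => dpath_isDirPath i.2 hkm hkn
  · intro i j hij p hpi hpj
    have hij' : i.1 ≠ j.1 := fun h => hij (Fin.ext h)
    have hi := i.2; have hj := j.2
    simp only [dpath, List.mem_map, List.mem_range] at hpi hpj
    obtain ⟨s, hs, hps⟩ := hpi
    obtain ⟨t, ht, hpt⟩ := hpj
    rw [← hps] at hpt
    unfold dpathFun at hpt
    split_ifs at hpt <;>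
      (rw [Prod.ext_iff] at hpt; simp only at hpt; omega)

lemma maxFlow_min_eq (x : ℕ × ℕ → ℕ) (m n : ℕ) (h1m : 1 ≤ m) (h1n : 1 ≤ n) :
    maxFlow x m n (min m n) = ∑ q ∈ Finset.Icc ((1:ℕ), (1:ℕ)) (m, n), x q := by
  have hkm : min m n ≤ m := min_le_left _ _
  have hkn : min m n ≤ n := min_le_right _ _
  rw [maxFlow]
  have hset : {v | ∃ π : Fin (min m n) → List (ℕ × ℕ), NIPathFamily m n (min m n) π ∧
      v = ∑ i : Fin (min m n), ((π i).map x).sum}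
      = {∑ q ∈ Finset.Icc ((1:ℕ), (1:ℕ)) (m, n), x q} := by
    ext v
    simp only [Set.mem_setOf_eq, Set.mem_singleton_iff]
    constructor
    · rintro ⟨π, hfam, rfl⟩
      exact family_cover_sum x m n (min m n) h1m h1n rfl π hfam
    · rintro rfl
      exact ⟨_, ppath_family hkm hkn,
        (family_cover_sum x m n (min m n) h1m h1n rfl _ (ppath_family hkm hkn)).symm⟩
  rw [hset]
  exact csSup_singleton _

lemma maxFlowDual_min_eq (x : ℕ × ℕ → ℕ) (m n : ℕ) (h1m : 1 ≤ m) (h1n : 1 ≤ n) :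
    maxFlowDual x m n (min m n) = ∑ q ∈ Finset.Icc ((1:ℕ), (1:ℕ)) (m, n), x q := by
  have hkm : min m n ≤ m := min_le_left _ _
  have hkn : min m n ≤ n := min_le_right _ _
  rw [maxFlowDual]
  have hset : {v | ∃ π : Fin (min m n) → List (ℕ × ℕ), NIPathFamilyDual m n (min m n) π ∧
      v = ∑ i : Fin (min m n), ((π i).map x).sum}
      = {∑ q ∈ Finset.Icc ((1:ℕ), (1:ℕ)) (m, n), x q} := by
    ext v
    simp only [Set.mem_setOf_eq, Set.mem_singleton_iff]
    constructor
    · rintro ⟨π, hfam, rfl⟩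
      exact family_cover_sum_dual x m n (min m n) h1m h1n rfl π hfam
    · rintro rfl
      exact ⟨_, dpath_family hkm hkn,
        (family_cover_sum_dual x m n (min m n) h1m h1n rfl _ (dpath_family hkm hkn)).symm⟩
  rw [hset]
  exact csSup_singleton _

/-! ### Corner counting -/

def colHeight (lam : Finset (ℕ × ℕ)) (n : ℕ) : ℕ :=
  (lam.filter (fun p => p.2 = n)).sup Prod.fst

lemma mem_iff_le_colHeight {lam : Finset (ℕ × ℕ)} (hlam : IsYoungDiagram lam)
    {i n : ℕ} (hi : 1 ≤ i) : (i, n) ∈ lam ↔ i ≤ colHeight lam n := by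
  constructor
  · intro h
    rw [colHeight]
    have hmem : (i, n) ∈ lam.filter (fun p => p.2 = n) := Finset.mem_filter.mpr ⟨h, rfl⟩
    exact Finset.le_sup (f := Prod.fst) hmem
  · intro h
    have hne : (lam.filter (fun p => p.2 = n)).Nonempty := by
      by_contra hcon
      rw [Finset.not_nonempty_iff_eq_empty] at hcon
      rw [colHeight, hcon] at h
      simp at h
      omega
    obtain ⟨p, hp, hpeq⟩ := Finset.exists_mem_eq_sup _ hne Prod.fst
    have hplam := Finset.mem_filter.mp hp
    have hq := hlam p hplam.1
    refine hq.2.2 (i, n) ?_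
    rw [Finset.mem_Icc, Prod.le_def, Prod.le_def]
    rw [colHeight] at h
    have hn : 1 ≤ n := hplam.2 ▸ hq.2.1
    have hip : i ≤ p.1 := hpeq ▸ h
    exact ⟨⟨hi, hn⟩, hip, le_of_eq hplam.2.symm⟩

lemma colHeight_anti {lam : Finset (ℕ × ℕ)} (hlam : IsYoungDiagram lam)
    {n n' : ℕ} (h1 : 1 ≤ n) (h : n ≤ n') : colHeight lam n' ≤ colHeight lam n := by
  rcases Nat.eq_zero_or_pos (colHeight lam n') with h0 | hpos
  · omega
  · have hmem : (colHeight lam n', n') ∈ lam := (mem_iff_le_colHeight hlam hpos).mpr le_rfl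
    have hq := hlam _ hmem
    have hmem2 : (colHeight lam n', n) ∈ lam := by
      refine hq.2.2 (colHeight lam n', n) ?_
      rw [Finset.mem_Icc, Prod.le_def, Prod.le_def]
      exact ⟨⟨hpos, h1⟩, le_rfl, h⟩
    exact (mem_iff_le_colHeight hlam hpos).mp hmem2

lemma corner_count {lam : Finset (ℕ × ℕ)} (hlam : IsYoungDiagram lam)
    {a b : ℕ} (hab : (a, b) ∈ lam) :
    (lam.filter (fun c => ((c.1 + 1, c.2) ∉ lam ∧ (c.1, c.2 + 1) ∉ lam) ∧
        a ≤ c.1 ∧ b ≤ c.2)).card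
    = (lam.filter (fun c => ((c.1 + 1, c.2) ∈ lam ∧ (c.1, c.2 + 1) ∈ lam ∧
        (c.1 + 1, c.2 + 1) ∉ lam) ∧ a ≤ c.1 ∧ b ≤ c.2)).card + 1 := by
  classical
  have ha1 : 1 ≤ a := (hlam _ hab).1
  have hb1 : 1 ≤ b := (hlam _ hab).2.1
  set nmax := (lam.filter (fun p => p.1 = a)).sup Prod.snd with hnmax
  have hble : b ≤ nmax := by
    rw [hnmax]
    have hmem : ((a : ℕ), b) ∈ lam.filter (fun p => p.1 = a) :=
      Finset.mem_filter.mpr ⟨hab, rfl⟩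
    exact Finset.le_sup (f := Prod.snd) hmem
  have hle_nmax : ∀ n, (a, n) ∈ lam → n ≤ nmax := by
    intro n h
    rw [hnmax]
    have hmem : ((a : ℕ), n) ∈ lam.filter (fun p => p.1 = a) :=
      Finset.mem_filter.mpr ⟨h, rfl⟩
    exact Finset.le_sup (f := Prod.snd) hmem
  have hanmax : (a, nmax) ∈ lam := by
    have hne : (lam.filter (fun p => p.1 = a)).Nonempty := ⟨(a, b), Finset.mem_filter.mpr ⟨hab, rfl⟩⟩
    obtain ⟨p, hp, hpeq⟩ := Finset.exists_mem_eq_sup _ hne Prod.snd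
    have hp' := Finset.mem_filter.mp hp
    have : p = (a, nmax) := by
      rw [Prod.ext_iff]
      exact ⟨hp'.2, by rw [hnmax, hpeq]⟩
    rw [← this]; exact hp'.1
  have hganmax : a ≤ colHeight lam nmax := (mem_iff_le_colHeight hlam ha1).mp hanmax
  have hgnmax1 : colHeight lam (nmax + 1) < a := by
    by_contra hcon
    push_neg at hcon
    have : (a, nmax + 1) ∈ lam := (mem_iff_le_colHeight hlam ha1).mpr hcon
    have := hle_nmax _ this
    omega
  have hmono : ∀ n, b ≤ n → n ≤ nmax → a ≤ colHeight lam n := by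
    intro n hbn' hnn
    exact le_trans hganmax (colHeight_anti hlam (by omega) hnn)
  set A := (Finset.Icc b nmax).filter (fun n => colHeight lam (n + 1) < colHeight lam n) with hA
  have hnmaxA : nmax ∈ A := by
    rw [hA]
    refine Finset.mem_filter.mpr ⟨Finset.mem_Icc.mpr ⟨hble, le_rfl⟩, ?_⟩
    omega
  -- the outer-corner set
  have hOC : lam.filter (fun c => ((c.1 + 1, c.2) ∉ lam ∧ (c.1, c.2 + 1) ∉ lam) ∧
      a ≤ c.1 ∧ b ≤ c.2) = A.image (fun n => (colHeight lam n, n)) := by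
    ext c
    obtain ⟨c1, c2⟩ := c
    simp only [Finset.mem_filter, Finset.mem_image, hA, Finset.mem_Icc]
    constructor
    · rintro ⟨hclam, ⟨hnr, hnc⟩, hac, hbc⟩
      have hc1g : c1 ≤ colHeight lam c2 := (mem_iff_le_colHeight hlam (by omega)).mp hclam
      have hc1g' : ¬ (c1 + 1 ≤ colHeight lam c2) := fun h =>
        hnr ((mem_iff_le_colHeight hlam (by omega)).mpr h)
      have hgc2 : colHeight lam c2 = c1 := by omega
      have hdrop : colHeight lam (c2 + 1) < colHeight lam c2 := by
        by_contra hcon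
        push_neg at hcon
        exact hnc ((mem_iff_le_colHeight hlam (by omega)).mpr (by omega))
      have hc2max : c2 ≤ nmax := by
        apply hle_nmax
        refine (hlam _ hclam).2.2 (a, c2) ?_
        rw [Finset.mem_Icc, Prod.le_def, Prod.le_def]
        exact ⟨⟨ha1, (hlam _ hclam).2.1⟩, hac, le_rfl⟩
      exact ⟨c2, ⟨⟨hbc, hc2max⟩, hdrop⟩, by rw [hgc2]⟩
    · rintro ⟨n, ⟨⟨hbn', hnn⟩, hdrop⟩, heq⟩
      have hgan : a ≤ colHeight lam n := hmono n hbn' hnn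
      rw [Prod.ext_iff] at heq
      obtain ⟨h1, h2⟩ := heq
      simp only at h1 h2
      subst h2
      subst h1
      refine ⟨(mem_iff_le_colHeight hlam (by omega)).mpr le_rfl, ⟨?_, ?_⟩, hgan, hbn'⟩
      · intro hmem
        have := (mem_iff_le_colHeight hlam (by omega)).mp hmem
        omega
      · intro hmem
        have h3 := (mem_iff_le_colHeight hlam (by omega)).mp hmem
        omega
  -- the inner-corner set
  have hIC : lam.filter (fun c => ((c.1 + 1, c.2) ∈ lam ∧ (c.1, c.2 + 1) ∈ lam ∧
      (c.1 + 1, c.2 + 1) ∉ lam) ∧ a ≤ c.1 ∧ b ≤ c.2)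
      = (A.erase nmax).image (fun n => (colHeight lam (n + 1), n)) := by
    ext c
    obtain ⟨c1, c2⟩ := c
    simp only [Finset.mem_filter, Finset.mem_image, Finset.mem_erase, hA, Finset.mem_Icc]
    constructor
    · rintro ⟨hclam, ⟨hr, hc, hrc⟩, hac, hbc⟩
      have h1 : c1 ≤ colHeight lam (c2 + 1) := (mem_iff_le_colHeight hlam (by omega)).mp hc
      have h2 : ¬ (c1 + 1 ≤ colHeight lam (c2 + 1)) := fun h =>
        hrc ((mem_iff_le_colHeight hlam (by omega)).mpr h)
      have h3 : c1 + 1 ≤ colHeight lam c2 := (mem_iff_le_colHeight hlam (by omega)).mp hr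
      have hc2max : c2 ≤ nmax := by
        apply hle_nmax
        refine (hlam _ hclam).2.2 (a, c2) ?_
        rw [Finset.mem_Icc, Prod.le_def, Prod.le_def]
        exact ⟨⟨ha1, (hlam _ hclam).2.1⟩, hac, le_rfl⟩
      have hne : c2 ≠ nmax := by
        intro h
        subst h
        omega
      exact ⟨c2, ⟨hne, ⟨hbc, hc2max⟩, by omega⟩, by rw [Prod.ext_iff]; exact ⟨by simp; omega, rfl⟩⟩
    · rintro ⟨n, ⟨hne, ⟨hbn', hnn⟩, hdrop⟩, heq⟩
      have hnn' : n + 1 ≤ nmax := by omega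
      have hgan : a ≤ colHeight lam (n + 1) := by
        refine le_trans hganmax (colHeight_anti hlam (by omega) hnn')
      rw [Prod.ext_iff] at heq
      obtain ⟨h1, h2⟩ := heq
      simp only at h1 h2
      subst h2
      subst h1
      refine ⟨(mem_iff_le_colHeight hlam (by omega)).mpr (by omega), ⟨?_, ?_, ?_⟩, hgan, hbn'⟩
      · exact (mem_iff_le_colHeight hlam (by omega)).mpr (by omega)
      · exact (mem_iff_le_colHeight hlam (by omega)).mpr le_rfl
      · intro hmem
        have := (mem_iff_le_colHeight hlam (by omega)).mp hmem
        omega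
  rw [hOC, hIC]
  rw [Finset.card_image_of_injOn (fun u hu v hv huv => by
    rw [Prod.ext_iff] at huv; exact huv.2)]
  rw [Finset.card_image_of_injOn (fun u hu v hv huv => by
    rw [Prod.ext_iff] at huv; exact huv.2)]
  rw [Finset.card_erase_of_mem hnmaxA]
  have : 0 < A.card := Finset.card_pos.mpr ⟨nmax, hnmaxA⟩
  omega

lemma young_sum_eq {lam : Finset (ℕ × ℕ)} (hlam : IsYoungDiagram lam) (x : ℕ × ℕ → ℕ) :
    ∑ q ∈ lam, x q
      + ∑ c ∈ lam.filter (fun c => (c.1 + 1, c.2) ∈ lam ∧ (c.1, c.2 + 1) ∈ lam ∧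
          (c.1 + 1, c.2 + 1) ∉ lam), ∑ q ∈ Finset.Icc ((1:ℕ), (1:ℕ)) c, x q
    = ∑ c ∈ lam.filter (fun c => (c.1 + 1, c.2) ∉ lam ∧ (c.1, c.2 + 1) ∉ lam),
        ∑ q ∈ Finset.Icc ((1:ℕ), (1:ℕ)) c, x q := by
  classical
  have hfilter : ∀ c ∈ lam, Finset.Icc ((1:ℕ), (1:ℕ)) c
      = lam.filter (fun q => q.1 ≤ c.1 ∧ q.2 ≤ c.2) := by
    intro c hc
    ext q
    rw [Finset.mem_Icc, Finset.mem_filter, Prod.le_def, Prod.le_def]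
    constructor
    · rintro ⟨h1, h2⟩
      refine ⟨(hlam _ hc).2.2 q ?_, h2⟩
      rw [Finset.mem_Icc, Prod.le_def, Prod.le_def]
      exact ⟨h1, h2⟩
    · rintro ⟨hq, h2⟩
      exact ⟨⟨(hlam _ hq).1, (hlam _ hq).2.1⟩, h2⟩
  have hS : ∀ (s : Finset (ℕ × ℕ)), s ⊆ lam →
      ∑ c ∈ s, ∑ q ∈ Finset.Icc ((1:ℕ), (1:ℕ)) c, x q
      = ∑ q ∈ lam, (s.filter (fun c => q.1 ≤ c.1 ∧ q.2 ≤ c.2)).card * x q := by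
    intro s hs
    calc ∑ c ∈ s, ∑ q ∈ Finset.Icc ((1:ℕ), (1:ℕ)) c, x q
        = ∑ c ∈ s, ∑ q ∈ lam, if q.1 ≤ c.1 ∧ q.2 ≤ c.2 then x q else 0 := by
          refine Finset.sum_congr rfl fun c hc => ?_
          rw [hfilter c (hs hc), Finset.sum_filter]
      _ = ∑ q ∈ lam, ∑ c ∈ s, if q.1 ≤ c.1 ∧ q.2 ≤ c.2 then x q else 0 := Finset.sum_comm
      _ = _ := by
          refine Finset.sum_congr rfl fun q hq => ?_
          rw [← Finset.sum_filter, Finset.sum_const, smul_eq_mul]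
  rw [hS _ (Finset.filter_subset _ _), hS _ (Finset.filter_subset _ _),
    ← Finset.sum_add_distrib]
  refine Finset.sum_congr rfl fun q hq => ?_
  rw [Finset.filter_filter, Finset.filter_filter]
  rw [corner_count hlam hq]
  ring

lemma sum_eq_of_rels {lam : Finset (ℕ × ℕ)} (hlam : IsYoungDiagram lam)
    (x x' r : ℕ × ℕ → ℕ)
    (hx : SatisfiesRSKRel lam x r) (hx' : SatisfiesBurgeRel lam x' r) :
    ∑ q ∈ lam, x q = ∑ q ∈ lam, x' q := by
  classical
  have key : ∀ c ∈ lam, (c.1 + 1, c.2 + 1) ∉ lam →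
      ∑ q ∈ Finset.Icc ((1:ℕ), (1:ℕ)) c, x q = ∑ q ∈ Finset.Icc ((1:ℕ), (1:ℕ)) c, x' q := by
    intro c hc hbc
    have h1 : 1 ≤ c.1 := (hlam _ hc).1
    have h2 : 1 ≤ c.2 := (hlam _ hc).2.1
    have e1 := hx c.1 c.2 hc hbc (min c.1 c.2) (by omega) le_rfl
    have e2 := hx' c.1 c.2 hc hbc (min c.1 c.2) (by omega) le_rfl
    rw [maxFlow_min_eq x c.1 c.2 h1 h2] at e1
    rw [maxFlowDual_min_eq x' c.1 c.2 h1 h2] at e2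
    rw [← e1, ← e2]
  have hb1 : ∀ c ∈ lam.filter (fun c => (c.1 + 1, c.2) ∉ lam ∧ (c.1, c.2 + 1) ∉ lam),
      (c.1 + 1, c.2 + 1) ∉ lam := by
    intro c hc
    rw [Finset.mem_filter] at hc
    intro hmem
    refine hc.2.1 ((hlam _ hmem).2.2 (c.1 + 1, c.2) ?_)
    rw [Finset.mem_Icc, Prod.le_def, Prod.le_def]
    have := hlam _ hc.1
    simp only
    omega
  have hOCeq : ∑ c ∈ lam.filter (fun c => (c.1 + 1, c.2) ∉ lam ∧ (c.1, c.2 + 1) ∉ lam),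
      ∑ q ∈ Finset.Icc ((1:ℕ), (1:ℕ)) c, x q
      = ∑ c ∈ lam.filter (fun c => (c.1 + 1, c.2) ∉ lam ∧ (c.1, c.2 + 1) ∉ lam),
      ∑ q ∈ Finset.Icc ((1:ℕ), (1:ℕ)) c, x' q :=
    Finset.sum_congr rfl fun c hc => key c (Finset.mem_filter.mp hc).1 (hb1 c hc)
  have hICeq : ∑ c ∈ lam.filter (fun c => (c.1 + 1, c.2) ∈ lam ∧ (c.1, c.2 + 1) ∈ lam ∧
          (c.1 + 1, c.2 + 1) ∉ lam),
      ∑ q ∈ Finset.Icc ((1:ℕ), (1:ℕ)) c, x q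
      = ∑ c ∈ lam.filter (fun c => (c.1 + 1, c.2) ∈ lam ∧ (c.1, c.2 + 1) ∈ lam ∧
          (c.1 + 1, c.2 + 1) ∉ lam),
      ∑ q ∈ Finset.Icc ((1:ℕ), (1:ℕ)) c, x' q :=
    Finset.sum_congr rfl fun c hc => key c (Finset.mem_filter.mp hc).1
      (Finset.mem_filter.mp hc).2.2.2
  have hx2 := young_sum_eq hlam x
  have hx2' := young_sum_eq hlam x'
  omega


/-- **Theorem (RSK(X) ≗ Bur(X), geometric case).** Let `X` be a random tableau of shape
`λ` with i.i.d. Geometric(p) entries, and let `R`, `B` be bijections from tableaux onto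
interlacing tableaux (of shape `λ`, entries in `ℤ≥0`) satisfying respectively the RSK and
the Burge relations. Then `R(X)` and `B(X)` have the same distribution. -/
theorem RSK_X_eq_Burge_X_in_distribution_geometric
    (lam : Finset (ℕ × ℕ)) (hlam : IsYoungDiagram lam)
    (p : ℝ) (hp : 0 < p) (hp1 : p < 1)
    {Ω : Type*} [MeasurableSpace Ω] (P : Measure Ω) [IsProbabilityMeasure P]
    (X : Ω → ℕ × ℕ → ℕ)
    (hmeas : ∀ q : ℕ × ℕ, Measurable fun ω => X ω q)
    (hzero : ∀ ω, ∀ q ∉ lam, X ω q = 0)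
    (hindep : iIndepFun
      (fun (q : {q : ℕ × ℕ // q ∈ lam}) => fun ω => X ω q.1) P)
    (hlaw : ∀ q ∈ lam, Measure.map (fun ω => X ω q) P = geometricMeasure ⟨p, hp.le, hp1.le⟩)
    (R B : {f : ℕ × ℕ → ℕ // ∀ q ∉ lam, f q = 0} ≃
      {f : ℕ × ℕ → ℕ // (∀ q ∉ lam, f q = 0) ∧ IsInterlacing lam f})
    (hR : ∀ x, SatisfiesRSKRel lam x.1 (R x).1)
    (hB : ∀ x, SatisfiesBurgeRel lam x.1 (B x).1) :
    Measure.map (fun ω => R ⟨X ω, fun q hq => hzero ω q hq⟩) P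
      = Measure.map (fun ω => B ⟨X ω, fun q hq => hzero ω q hq⟩) P := by
  classical
  haveI hcountD : Countable {f : ℕ × ℕ → ℕ // ∀ q ∉ lam, f q = 0} := by
    refine Function.Injective.countable
      (f := fun (f : {f : ℕ × ℕ → ℕ // ∀ q ∉ lam, f q = 0}) (q : {q : ℕ × ℕ // q ∈ lam}) =>
        f.1 q.1) ?_
    intro f g h
    apply Subtype.ext; funext q'
    by_cases hq : q' ∈ lam
    · exact congrFun h ⟨q', hq⟩
    · rw [f.2 q' hq, g.2 q' hq]
  haveI hcountT : Countable {f : ℕ × ℕ → ℕ // (∀ q ∉ lam, f q = 0) ∧ IsInterlacing lam f} := by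
    refine Function.Injective.countable
      (f := fun (f : {f : ℕ × ℕ → ℕ // (∀ q ∉ lam, f q = 0) ∧ IsInterlacing lam f})
        (q : {q : ℕ × ℕ // q ∈ lam}) => f.1 q.1) ?_
    intro f g h
    apply Subtype.ext; funext q'
    by_cases hq : q' ∈ lam
    · exact congrFun h ⟨q', hq⟩
    · rw [f.2.1 q' hq, g.2.1 q' hq]
  have hXhat : Measurable (fun ω =>
      (⟨X ω, fun q hq => hzero ω q hq⟩ : {f : ℕ × ℕ → ℕ // ∀ q ∉ lam, f q = 0})) :=
    Measurable.subtype_mk (measurable_pi_lambda _ hmeas)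
  have hsingle : ∀ (E : {f : ℕ × ℕ → ℕ // ∀ q ∉ lam, f q = 0} ≃
      {f : ℕ × ℕ → ℕ // (∀ q ∉ lam, f q = 0) ∧ IsInterlacing lam f})
      (t : {f : ℕ × ℕ → ℕ // (∀ q ∉ lam, f q = 0) ∧ IsInterlacing lam f}),
      Measure.map (fun ω => E ⟨X ω, fun q hq => hzero ω q hq⟩) P {t}
      = (ENNReal.ofReal (1 - p)) ^ (∑ q ∈ lam, (E.symm t).1 q)
        * (ENNReal.ofReal p) ^ lam.card := by
    intro E t
    have hmeasE : Measurable (fun d : {f : ℕ × ℕ → ℕ // ∀ q ∉ lam, f q = 0} => E d) :=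
      measurable_of_countable _
    have hmeasmap : Measurable (fun ω => E ⟨X ω, fun q hq => hzero ω q hq⟩) :=
      hmeasE.comp hXhat
    rw [Measure.map_apply hmeasmap (measurableSet_singleton t)]
    have hpre : ((fun ω => E ⟨X ω, fun q hq => hzero ω q hq⟩) ⁻¹' {t})
        = ⋂ q : {q : ℕ × ℕ // q ∈ lam},
            (fun ω => X ω q.1) ⁻¹' {(E.symm t).1 q.1} := by
      ext ω
      simp only [Set.mem_preimage, Set.mem_singleton_iff, Set.mem_iInter]
      rw [Equiv.apply_eq_iff_eq_symm_apply, Subtype.ext_iff]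
      constructor
      · intro h q
        exact congrFun h q.1
      · intro h
        funext q'
        show X ω q' = (E.symm t).1 q'
        by_cases hq : q' ∈ lam
        · exact h ⟨q', hq⟩
        · rw [hzero ω q' hq, (E.symm t).2 q' hq]
    rw [hpre]
    have hII := (iIndepFun_iff_measure_inter_preimage_eq_mul.mp hindep) Finset.univ
      (sets := fun q => {(E.symm t).1 q.1}) (fun i _ => measurableSet_singleton _)
    have huniv : (⋂ q : {q : ℕ × ℕ // q ∈ lam}, (fun ω => X ω q.1) ⁻¹' {(E.symm t).1 q.1})
        = ⋂ q ∈ (Finset.univ : Finset {q : ℕ × ℕ // q ∈ lam}),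
            (fun ω => X ω q.1) ⁻¹' {(E.symm t).1 q.1} := by
      simp
    rw [huniv, hII]
    have hval : ∀ q : {q : ℕ × ℕ // q ∈ lam},
        P ((fun ω => X ω q.1) ⁻¹' {(E.symm t).1 q.1})
        = (ENNReal.ofReal (1 - p)) ^ ((E.symm t).1 q.1) * ENNReal.ofReal p := by
      intro q
      have h1 : Measure.map (fun ω => X ω q.1) P {(E.symm t).1 q.1}
          = P ((fun ω => X ω q.1) ⁻¹' {(E.symm t).1 q.1}) :=
        Measure.map_apply (hmeas q.1) (measurableSet_singleton _)
      rw [← h1, hlaw q.1 q.2,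
        geometricMeasure_singleton (fun h => hp.ne' (congrArg Subtype.val h))]
      show ENNReal.ofReal ((1 - p) ^ ((E.symm t).1 q.1) * p) = _
      rw [ENNReal.ofReal_mul (by
          have h01 : (0:ℝ) ≤ 1 - p := by linarith
          positivity),
        ENNReal.ofReal_pow (by linarith)]
    calc ∏ q : {q : ℕ × ℕ // q ∈ lam}, P ((fun ω => X ω q.1) ⁻¹' {(E.symm t).1 q.1})
        = ∏ q : {q : ℕ × ℕ // q ∈ lam},
            (ENNReal.ofReal (1 - p)) ^ ((E.symm t).1 q.1) * ENNReal.ofReal p := by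
          exact Finset.prod_congr rfl fun q _ => hval q
      _ = (∏ q : {q : ℕ × ℕ // q ∈ lam}, (ENNReal.ofReal (1 - p)) ^ ((E.symm t).1 q.1))
            * (ENNReal.ofReal p) ^ (Fintype.card {q : ℕ × ℕ // q ∈ lam}) := by
          rw [Finset.prod_mul_distrib, Finset.prod_const, Finset.card_univ]
      _ = _ := by
          rw [Finset.prod_pow_eq_pow_sum, Fintype.card_coe]
          congr 1
          rw [← Finset.sum_coe_sort lam (fun q => (E.symm t).1 q)]
  apply MeasureTheory.Measure.ext_of_singleton
  intro t
  rw [hsingle R t, hsingle B t]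
  have hsum : ∑ q ∈ lam, (R.symm t).1 q = ∑ q ∈ lam, (B.symm t).1 q := by
    refine sum_eq_of_rels hlam _ _ t.1 ?_ ?_
    · have := hR (R.symm t)
      rwa [Equiv.apply_symm_apply] at this
    · have := hB (B.symm t)
      rwa [Equiv.apply_symm_apply] at this
  rw [hsum]
end
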